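/- Let φ : ℝ² → ℝ² be the map φ(x¹,x²) = ( x¹ − x² cos x¹ / √(1 + cos² x¹), sin x¹ + x² / √(1 + cos² x¹) ). Then φ is differentiable, and the induced (pullback) metric, given by γ_{ij} = ∂_i φ · ∂_j φ (the entries of (Dφ)ᵀ(Dφ)), satisfies at every point (x¹,x²): γ₁₁ = ((1 + cos² x¹)^{3/2} + x² sin x¹)² / (1 + cos² x¹)², γ₁₂ = γ₂₁ = 0, and γ₂₂ = 1. -/

import Mathlib

open Real

noncomputable section

/-- Partial derivative in direction `j` (j = 0 ↦ ∂₁, j = 1 ↦ ∂₂) of a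
vector-valued function on ℝ². -/
def pdv (j : Fin 2) (f : ℝ × ℝ → ℝ × ℝ) (x : ℝ × ℝ) : ℝ × ℝ :=
  fderiv ℝ f x (if j = 0 then ((1 : ℝ), (0 : ℝ)) else ((0 : ℝ), (1 : ℝ)))

/-- Euclidean dot product on ℝ². -/
def dot (u v : ℝ × ℝ) : ℝ := u.1 * v.1 + u.2 * v.2

lemma gpos (t : ℝ) : 0 < Real.sqrt (1 + Real.cos t ^ 2) :=
  Real.sqrt_pos.mpr (by positivity)

lemma gsq (t : ℝ) : Real.sqrt (1 + Real.cos t ^ 2) ^ 2 = 1 + Real.cos t ^ 2 :=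
  Real.sq_sqrt (by positivity)

lemma hasDerivAt_g (t : ℝ) :
    HasDerivAt (fun t => Real.sqrt (1 + Real.cos t ^ 2))
      (-(Real.cos t * Real.sin t) / Real.sqrt (1 + Real.cos t ^ 2)) t := by
  have h : HasDerivAt (fun t => 1 + Real.cos t ^ 2)
      (2 * Real.cos t ^ 1 * (-Real.sin t)) t :=
    ((Real.hasDerivAt_cos t).pow 2).const_add 1
  have h2 := h.sqrt (by positivity)
  convert h2 using 1
  have hg := gpos t
  field_simp

lemma aux1 (G c s : ℝ) (hG : 0 < G) (h2 : G ^ 2 = 1 + c ^ 2) :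
    -s / G ^ 3 = (-s * G - c * (-(c * s) / G)) / G ^ 2 := by
  have hne : G ≠ 0 := ne_of_gt hG
  field_simp
  linear_combination s * h2

lemma aux2 (G c s : ℝ) (hG : G ≠ 0) :
    c * s / G ^ 3 = (0 * G - 1 * (-(c * s) / G)) / G ^ 2 := by
  field_simp
  ring

lemma hasDerivAt_h (t : ℝ) :
    HasDerivAt (fun t => Real.cos t / Real.sqrt (1 + Real.cos t ^ 2))
      (-Real.sin t / Real.sqrt (1 + Real.cos t ^ 2) ^ 3) t := by
  have h := (Real.hasDerivAt_cos t).div (hasDerivAt_g t) (ne_of_gt (gpos t))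
  exact h.congr_deriv (aux1 _ _ _ (gpos t) (gsq t)).symm

lemma hasDerivAt_k (t : ℝ) :
    HasDerivAt (fun t => 1 / Real.sqrt (1 + Real.cos t ^ 2))
      (Real.cos t * Real.sin t / Real.sqrt (1 + Real.cos t ^ 2) ^ 3) t := by
  have h := (hasDerivAt_const t (1:ℝ)).div (hasDerivAt_g t) (ne_of_gt (gpos t))
  exact h.congr_deriv (aux2 _ _ _ (ne_of_gt (gpos t))).symm

/-- the S-shaped map φ is differentiable and its induced
(pullback) metric γ_{ij} = ∂_i φ · ∂_j φ is
γ₁₁ = ((1 + cos² x¹)^{3/2} + x² sin x¹)² / (1 + cos² x¹)²,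
γ₁₂ = γ₂₁ = 0, γ₂₂ = 1. -/
theorem induced_metric_S_shaped_map (φ : ℝ × ℝ → ℝ × ℝ)
    (hφ : ∀ x : ℝ × ℝ,
      φ x = (x.1 - x.2 * cos x.1 / Real.sqrt (1 + cos x.1 ^ 2),
             sin x.1 + x.2 / Real.sqrt (1 + cos x.1 ^ 2))) :
    Differentiable ℝ φ ∧
    ∀ x : ℝ × ℝ,
      dot (pdv 0 φ x) (pdv 0 φ x)
        = ((1 + cos x.1 ^ 2) ^ ((3 : ℝ) / 2) + x.2 * sin x.1) ^ 2
            / (1 + cos x.1 ^ 2) ^ 2 ∧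
      dot (pdv 0 φ x) (pdv 1 φ x) = 0 ∧
      dot (pdv 1 φ x) (pdv 0 φ x) = 0 ∧
      dot (pdv 1 φ x) (pdv 1 φ x) = 1 := by
  have key : ∀ x : ℝ × ℝ, HasFDerivAt φ
      ((ContinuousLinearMap.fst ℝ ℝ ℝ -
          (x.2 • (-Real.sin x.1 / Real.sqrt (1 + Real.cos x.1 ^ 2) ^ 3) •
              ContinuousLinearMap.fst ℝ ℝ ℝ +
            (Real.cos x.1 / Real.sqrt (1 + Real.cos x.1 ^ 2)) •
              ContinuousLinearMap.snd ℝ ℝ ℝ)).prod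
        (Real.cos x.1 • ContinuousLinearMap.fst ℝ ℝ ℝ +
          (x.2 • (Real.cos x.1 * Real.sin x.1 / Real.sqrt (1 + Real.cos x.1 ^ 2) ^ 3) •
              ContinuousLinearMap.fst ℝ ℝ ℝ +
            (1 / Real.sqrt (1 + Real.cos x.1 ^ 2)) •
              ContinuousLinearMap.snd ℝ ℝ ℝ))) x := by
    intro x
    have hH : HasFDerivAt (fun y : ℝ × ℝ => Real.cos y.1 / Real.sqrt (1 + Real.cos y.1 ^ 2))
        ((-Real.sin x.1 / Real.sqrt (1 + Real.cos x.1 ^ 2) ^ 3) •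
          ContinuousLinearMap.fst ℝ ℝ ℝ) x :=
      (hasDerivAt_h x.1).comp_hasFDerivAt x hasFDerivAt_fst
    have hK : HasFDerivAt (fun y : ℝ × ℝ => 1 / Real.sqrt (1 + Real.cos y.1 ^ 2))
        ((Real.cos x.1 * Real.sin x.1 / Real.sqrt (1 + Real.cos x.1 ^ 2) ^ 3) •
          ContinuousLinearMap.fst ℝ ℝ ℝ) x :=
      (hasDerivAt_k x.1).comp_hasFDerivAt x hasFDerivAt_fst
    have hs : HasFDerivAt (fun y : ℝ × ℝ => Real.sin y.1)
        ((Real.cos x.1) • ContinuousLinearMap.fst ℝ ℝ ℝ) x :=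
      (Real.hasDerivAt_sin x.1).comp_hasFDerivAt x hasFDerivAt_fst
    have h1 := (hasFDerivAt_fst (𝕜 := ℝ) (p := x)).sub ((hasFDerivAt_snd).mul hH)
    have h2 := hs.add ((hasFDerivAt_snd).mul hK)
    have hP := h1.prodMk h2
    refine hP.congr_of_eventuallyEq ?_
    filter_upwards with y
    rw [hφ y]
    simp [mul_div_assoc, div_eq_mul_inv, mul_assoc]
  refine ⟨fun x => (key x).differentiableAt, fun x => ?_⟩
  have hD := (key x).fderiv
  have hp0 : pdv 0 φ x = (1 - x.2 * (-Real.sin x.1 / Real.sqrt (1 + Real.cos x.1 ^ 2) ^ 3),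
      Real.cos x.1 + x.2 * (Real.cos x.1 * Real.sin x.1 / Real.sqrt (1 + Real.cos x.1 ^ 2) ^ 3)) := by
    simp only [pdv, hD, if_pos rfl]
    simp
  have hp1 : pdv 1 φ x = (-(Real.cos x.1 / Real.sqrt (1 + Real.cos x.1 ^ 2)),
      (Real.sqrt (1 + Real.cos x.1 ^ 2))⁻¹) := by
    have : (1 : Fin 2) ≠ 0 := by decide
    simp only [pdv, hD, if_neg this]
    simp
  have hg := gpos x.1
  have h2 := gsq x.1
  have hgne : Real.sqrt (1 + Real.cos x.1 ^ 2) ≠ 0 := ne_of_gt hg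
  have hrpow : (1 + Real.cos x.1 ^ 2) ^ ((3 : ℝ) / 2)
      = Real.sqrt (1 + Real.cos x.1 ^ 2) ^ 3 := by
    rw [show Real.sqrt (1 + Real.cos x.1 ^ 2) = (1 + Real.cos x.1 ^ 2) ^ ((1:ℝ)/2) from
        Real.sqrt_eq_rpow _,
      ← Real.rpow_natCast ((1 + Real.cos x.1 ^ 2) ^ ((1:ℝ)/2)) 3,
      ← Real.rpow_mul (by positivity)]
    norm_num
  rw [hp0, hp1, hrpow]
  set G := Real.sqrt (1 + Real.cos x.1 ^ 2) with hGdef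
  set c := Real.cos x.1
  set s := Real.sin x.1
  refine ⟨?_, ?_, ?_, ?_⟩
  · simp only [dot]
    rw [← h2]
    field_simp
    linear_combination (-((x.2 * s + G ^ 3) ^ 2)) * h2
  · simp only [dot]
    field_simp
    ring
  · simp only [dot]
    field_simp
    ring
  · simp only [dot]
    field_simp
    linarith [h2]
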